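/- The open interval (u_k, v_k) contains the element interval (x_{i−1}, x_i) if and only if σ(i) − p_i ≤ k ≤ σ(i), where σ(i) = Σ_{j=0}^{i−1}(p_{j+1} − r_j); for all other k, the intersection (u_k, v_k) ∩ (x_{i−1}, x_i) is empty. -/

import Mathlib

theorem aux_cross (f : ℕ → ℤ) (k : ℤ) :
    ∀ b a, a < b → f a < k → k ≤ f b →
      ∃ j, a ≤ j ∧ j < b ∧ f j < k ∧ k ≤ f (j + 1) := by
  intro b
  induction b with
  | zero => intro a h; omega
  | succ n ih =>
    intro a hab h1 h2
    by_cases h : k ≤ f n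
    · rcases Nat.lt_or_ge a n with h' | h'
      · obtain ⟨j, hj1, hj2, hj3, hj4⟩ := ih a h' h1 h
        exact ⟨j, hj1, Nat.lt_succ_of_lt hj2, hj3, hj4⟩
      · have ha : a = n := by omega
        subst ha; omega
    · exact ⟨n, by omega, by omega, by omega, h2⟩

/-- (u_k, v_k) contains (x_{i−1}, x_i) precisely when σ(i) − p_i ≤ k ≤ σ(i),
where σ(i) = Σ_{j=0}^{i−1}(p_{j+1} − r_j); for all other k the intersection
(u_k, v_k) ∩ (x_{i−1}, x_i) is empty. -/
theorem knot_support_lemma (m : ℕ) (hm : 1 ≤ m) (x : ℕ → ℝ)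
    (hx : ∀ i, i < m → x i < x (i + 1))
    (p r : ℕ → ℤ)
    (hp : ∀ i, 1 ≤ i → i ≤ m → 0 ≤ p i)
    (hr0 : r 0 = -1) (hrm : r m = -1)
    (hr : ∀ i, 1 ≤ i → i ≤ m - 1 → -1 ≤ r i ∧ r i ≤ min (p i) (p (i + 1)))
    (u v : ℤ → ℝ)
    (hu : ∀ i, i < m → ∀ k : ℤ,
      (∑ j ∈ Finset.range i, (p (j + 1) - r j)) < k →
      k ≤ (∑ j ∈ Finset.range (i + 1), (p (j + 1) - r j)) → u k = x i)
    (hv : ∀ i, 1 ≤ i → i ≤ m → ∀ k : ℤ,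
      (∑ j ∈ Finset.Icc 1 (i - 1), (p j - r j)) < k →
      k ≤ (∑ j ∈ Finset.Icc 1 i, (p j - r j)) → v k = x i)
    (i : ℕ) (hi1 : 1 ≤ i) (hi2 : i ≤ m)
    (k : ℤ) (hk1 : 1 ≤ k) (hkN : k ≤ ∑ j ∈ Finset.range m, (p (j + 1) - r j)) :
    (((∑ j ∈ Finset.range i, (p (j + 1) - r j)) - p i ≤ k ∧
        k ≤ ∑ j ∈ Finset.range i, (p (j + 1) - r j)) →
      Set.Ioo (u k) (v k) ∩ Set.Ioo (x (i - 1)) (x i) = Set.Ioo (x (i - 1)) (x i)) ∧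
    (¬((∑ j ∈ Finset.range i, (p (j + 1) - r j)) - p i ≤ k ∧
        k ≤ ∑ j ∈ Finset.range i, (p (j + 1) - r j)) →
      Set.Ioo (u k) (v k) ∩ Set.Ioo (x (i - 1)) (x i) = ∅) := by
  -- basic term nonnegativity
  have hSterm : ∀ j, j < m → 0 ≤ p (j + 1) - r j := by
    intro j hj
    rcases Nat.eq_zero_or_pos j with h | h
    · subst h
      have := hp 1 le_rfl hm
      show 0 ≤ p 1 - r 0
      rw [hr0]; omega
    · have h1 := (hr j h (by omega)).2
      rw [le_min_iff] at h1
      omega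
  have hTterm : ∀ j, 1 ≤ j → j ≤ m → 0 ≤ p j - r j := by
    intro j h1 h2
    rcases eq_or_lt_of_le h2 with h | h
    · subst h
      have := hp j h1 le_rfl
      rw [hrm]; omega
    · have h3 := (hr j h1 (by omega)).2
      rw [le_min_iff] at h3
      omega
  -- monotonicity of sigma
  have hSmono : ∀ a b : ℕ, a ≤ b → b ≤ m →
      (∑ j ∈ Finset.range a, (p (j + 1) - r j)) ≤
        ∑ j ∈ Finset.range b, (p (j + 1) - r j) := by
    intro a b hab hbm
    apply Finset.sum_le_sum_of_subset_of_nonneg (Finset.range_subset_range.mpr hab)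
    intro j hj _
    exact hSterm j (by have := Finset.mem_range.mp hj; omega)
  -- monotonicity of x
  have hxmono : ∀ a b : ℕ, a ≤ b → b ≤ m → x a ≤ x b := by
    intro a b hab hbm
    induction b with
    | zero => have : a = 0 := Nat.le_zero.mp hab; rw [this]
    | succ n ih =>
      rcases Nat.lt_or_ge a (n + 1) with h | h
      · exact le_trans (ih (by omega) (by omega)) (le_of_lt (hx n (by omega)))
      · have : a = n + 1 := by omega
        rw [this]
  -- relation T n = S n - 1 - r n
  have hTS : ∀ n : ℕ, (∑ j ∈ Finset.Icc 1 n, (p j - r j)) =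
      (∑ j ∈ Finset.range n, (p (j + 1) - r j)) - 1 - r n := by
    intro n
    induction n with
    | zero => simp [hr0]
    | succ n ih =>
      rw [Finset.sum_Icc_succ_top (by omega : 1 ≤ n + 1), Finset.sum_range_succ]
      omega
  -- T (i-1) = S i - p i - 1
  have hSi : (∑ j ∈ Finset.range i, (p (j + 1) - r j)) =
      (∑ j ∈ Finset.range (i - 1), (p (j + 1) - r j)) + (p i - r (i - 1)) := by
    have h := Finset.sum_range_succ (fun j => p (j + 1) - r j) (i - 1)
    rw [show i - 1 + 1 = i from by omega] at h
    simpa using h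
  have hT1 : (∑ j ∈ Finset.Icc 1 (i - 1), (p j - r j)) =
      (∑ j ∈ Finset.range i, (p (j + 1) - r j)) - p i - 1 := by
    have h := hTS (i - 1)
    omega
  have hTm : k ≤ ∑ j ∈ Finset.Icc 1 m, (p j - r j) := by
    have h := hTS m
    omega
  refine ⟨?_, ?_⟩
  · rintro ⟨h1, h2⟩
    rw [Set.inter_eq_right]
    -- find j for u
    obtain ⟨j, hj0, hji, hjl, hjr⟩ :=
      aux_cross (fun n => ∑ j ∈ Finset.range n, (p (j + 1) - r j)) k i 0
        (by omega)
        (by simp only [Finset.range_zero, Finset.sum_empty]; omega)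
        h2
    have huk : u k = x j := hu j (by omega) k hjl hjr
    -- find l for v
    obtain ⟨l, hl0, hlm, hll, hlr⟩ :=
      aux_cross (fun n => ∑ j ∈ Finset.Icc 1 n, (p j - r j)) k m (i - 1)
        (by omega)
        (by show (∑ j ∈ Finset.Icc 1 (i - 1), (p j - r j)) < k; omega)
        hTm
    have hvk : v k = x (l + 1) := hv (l + 1) (by omega) (by omega) k (by simpa using hll) hlr
    apply Set.Ioo_subset_Ioo
    · rw [huk]; exact hxmono j (i - 1) (by omega) (by omega)
    · rw [hvk]; exact hxmono i (l + 1) (by omega) (by omega)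
  · intro hnot
    by_cases h2 : k ≤ ∑ j ∈ Finset.range i, (p (j + 1) - r j)
    · -- k ≤ T (i-1), so v k ≤ x (i-1)
      have h3 : ¬ ((∑ j ∈ Finset.range i, (p (j + 1) - r j)) - p i ≤ k) :=
        fun h => hnot ⟨h, h2⟩
      have hkle : k ≤ ∑ j ∈ Finset.Icc 1 (i - 1), (p j - r j) := by omega
      have hi2' : 1 < i := by
        by_contra h
        have he : i = 1 := by omega
        rw [he] at hkle
        simp only [Nat.sub_self] at hkle
        rw [show Finset.Icc 1 0 = ∅ from Finset.Icc_eq_empty (by omega),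
          Finset.sum_empty] at hkle
        omega
      obtain ⟨l, hl0, hli, hll, hlr⟩ :=
        aux_cross (fun n => ∑ j ∈ Finset.Icc 1 n, (p j - r j)) k (i - 1) 0
          (by omega)
          (by show (∑ j ∈ Finset.Icc 1 0, (p j - r j)) < k
              rw [show Finset.Icc 1 0 = ∅ from Finset.Icc_eq_empty (by omega)]
              simp only [Finset.sum_empty]; omega)
          hkle
      have hvk : v k = x (l + 1) := hv (l + 1) (by omega) (by omega) k (by simpa using hll) hlr
      have hxle : x (l + 1) ≤ x (i - 1) := hxmono (l + 1) (i - 1) (by omega) (by omega)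
      ext t
      simp only [Set.mem_inter_iff, Set.mem_Ioo, Set.mem_empty_iff_false, iff_false, not_and]
      rintro ⟨ht1, ht2⟩ ht3 ht4
      rw [hvk] at ht2
      linarith
    · -- k > S i, so u k ≥ x i
      have him : i < m := by
        rcases eq_or_lt_of_le hi2 with he | hlt
        · exact absurd (he ▸ hkN) h2
        · exact hlt
      obtain ⟨j, hji, hjm, hjl, hjr⟩ :=
        aux_cross (fun n => ∑ j ∈ Finset.range n, (p (j + 1) - r j)) k m i
          him (by show (∑ j ∈ Finset.range i, (p (j + 1) - r j)) < k; omega) hkN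
      have huk : u k = x j := hu j hjm k hjl hjr
      have hxle : x i ≤ x j := hxmono i j hji (by omega)
      ext t
      simp only [Set.mem_inter_iff, Set.mem_Ioo, Set.mem_empty_iff_false, iff_false, not_and]
      rintro ⟨ht1, ht2⟩ ht3 ht4
      rw [huk] at ht1
      linarith
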